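/- Let Ω be a properly convex domain, and let {x_n}, {y_n} be sequences in Ω with limits x and y in the closure of Ω. If sup_n d_Ω(x_n, y_n) < ∞, then y ∈ F_Ω(x), i.e., y lies in the face of x. -/

import Mathlib

open Set Filter Classical

abbrev Ed (d : ℕ) := EuclideanSpace ℝ (Fin d)

/-- A properly convex domain in an affine chart: a bounded open convex nonempty set. -/
def IsProperlyConvex {d : ℕ} (Ω : Set (Ed d)) : Prop :=
  IsOpen Ω ∧ Convex ℝ Ω ∧ Bornology.IsBounded Ω ∧ Ω.Nonempty

/-- The face of `x`: `x` together with all points `q` such that some segment inside the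
closure of `Ω` contains both `x` and `q` in its interior. -/
def face {d : ℕ} (Ω : Set (Ed d)) (x : Ed d) : Set (Ed d) :=
  insert x {q | ∃ u v : Ed d, segment ℝ u v ⊆ closure Ω ∧
    x ∈ openSegment ℝ u v ∧ q ∈ openSegment ℝ u v}

/-- The Hilbert metric on a bounded open convex set, defined via the cross-ratio of
`x`, `y` and the two intersection points of the line through `x, y` with the boundary. -/
noncomputable def hilbertDist {d : ℕ} (Ω : Set (Ed d)) (x y : Ed d) : ℝ :=
  if x = y then 0 else
    let a := x + (sSup {t : ℝ | x + t • (x - y) ∈ Ω}) • (x - y)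
    let b := y + (sSup {t : ℝ | y + t • (y - x) ∈ Ω}) • (y - x)
    Real.log ((‖b - x‖ * ‖y - a‖) / (‖b - y‖ * ‖x - a‖))

/-- If sequences `xₙ, yₙ` in `Ω` converge to `x, y` in the closure of `Ω` and the
Hilbert distances `d_Ω(xₙ, yₙ)` are uniformly bounded, then `y` lies in the face of `x`. -/
lemma sSup_props {d : ℕ} {Ω : Set (Ed d)} (hopen : IsOpen Ω) {R : ℝ}
    (hR : Ω ⊆ Metric.ball 0 R) {p q : Ed d} (hp : p ∈ Ω) (hpq : p ≠ q) :
    0 < sSup {t : ℝ | p + t • (p - q) ∈ Ω} ∧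
    sSup {t : ℝ | p + t • (p - q) ∈ Ω} * ‖p - q‖ ≤ 2 * R ∧
    p + sSup {t : ℝ | p + t • (p - q) ∈ Ω} • (p - q) ∈ closure Ω := by
  set S := {t : ℝ | p + t • (p - q) ∈ Ω} with hS
  have hr0 : (0:ℝ) < ‖p - q‖ := by
    rw [norm_pos_iff]; exact sub_ne_zero.mpr hpq
  have h0S : (0:ℝ) ∈ S := by simp [hS, hp]
  have hne : S.Nonempty := ⟨0, h0S⟩
  have hmemb : ∀ t ∈ S, t ≤ 2 * R / ‖p - q‖ := by
    intro t ht
    have h1 : ‖p + t • (p - q)‖ < R := by simpa using hR ht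
    have h2 : ‖p‖ < R := by simpa using hR hp
    have h3 : ‖t • (p - q)‖ ≤ ‖p + t • (p - q)‖ + ‖p‖ := by
      have := norm_sub_le (p + t • (p - q)) p
      simpa using this
    rw [norm_smul, Real.norm_eq_abs] at h3
    rw [le_div_iff₀ hr0]
    have : t * ‖p - q‖ ≤ |t| * ‖p - q‖ :=
      mul_le_mul_of_nonneg_right (le_abs_self t) hr0.le
    linarith
  have hbdd : BddAbove S := ⟨2 * R / ‖p - q‖, hmemb⟩
  have hspos : 0 < sSup S := by
    obtain ⟨ε, hε, hball⟩ := Metric.isOpen_iff.mp hopen p hp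
    have ht0 : ε / (2 * ‖p - q‖) ∈ S := by
      apply hball
      rw [Metric.mem_ball, dist_eq_norm]
      have : ‖p + (ε / (2 * ‖p - q‖)) • (p - q) - p‖ = ε / (2 * ‖p - q‖) * ‖p - q‖ := by
        rw [add_sub_cancel_left, norm_smul, Real.norm_eq_abs,
          abs_of_pos (by positivity)]
      rw [this, div_mul_eq_mul_div, div_lt_iff₀ (by positivity)]
      nlinarith
    calc (0:ℝ) < ε / (2 * ‖p - q‖) := by positivity
    _ ≤ sSup S := le_csSup hbdd ht0
  refine ⟨hspos, ?_, ?_⟩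
  · rw [← le_div_iff₀ hr0]
    exact csSup_le hne hmemb
  · have hlub := isLUB_csSup hne hbdd
    have hcl : sSup S ∈ closure S := hlub.mem_closure hne
    exact map_mem_closure (f := fun t : ℝ => p + t • (p - q)) (by fun_prop) hcl (fun t ht => ht)

lemma hilbert_eq {d : ℕ} {Ω : Set (Ed d)} {p q : Ed d} (hpq : p ≠ q)
    (hs : 0 < sSup {t : ℝ | p + t • (p - q) ∈ Ω})
    (ht : 0 < sSup {t : ℝ | q + t • (q - p) ∈ Ω}) :
    hilbertDist Ω p q = Real.log
      ((1 + sSup {t : ℝ | q + t • (q - p) ∈ Ω}) *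
        (1 + sSup {t : ℝ | p + t • (p - q) ∈ Ω}) /
       (sSup {t : ℝ | q + t • (q - p) ∈ Ω} * sSup {t : ℝ | p + t • (p - q) ∈ Ω})) := by
  set s := sSup {t : ℝ | p + t • (p - q) ∈ Ω} with hsdef
  set t := sSup {t : ℝ | q + t • (q - p) ∈ Ω} with htdef
  have hr0 : (0:ℝ) < ‖q - p‖ := by
    rw [norm_pos_iff]; exact sub_ne_zero.mpr (Ne.symm hpq)
  rw [hilbertDist, if_neg hpq]
  simp only
  have e1 : q + t • (q - p) - p = (1 + t) • (q - p) := by module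
  have e2 : q - (p + s • (p - q)) = (1 + s) • (q - p) := by module
  have e3 : q + t • (q - p) - q = t • (q - p) := by module
  have e4 : p - (p + s • (p - q)) = s • (q - p) := by module
  rw [e1, e2, e3, e4, norm_smul, norm_smul, norm_smul, norm_smul,
    Real.norm_eq_abs, Real.norm_eq_abs, Real.norm_eq_abs, Real.norm_eq_abs,
    abs_of_pos (by linarith), abs_of_pos (by linarith), abs_of_pos ht, abs_of_pos hs]
  congr 1
  field_simp

lemma lower_bound {s t M : ℝ} (hs : 0 < s) (ht : 0 < t)
    (h : Real.log ((1 + t) * (1 + s) / (t * s)) ≤ M) : Real.exp (-M) ≤ s := by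
  have hpos : 0 < (1 + t) * (1 + s) / (t * s) := by positivity
  have hA : (1 + t) * (1 + s) / (t * s) ≤ Real.exp M :=
    (Real.log_le_iff_le_exp hpos).mp h
  have h2 : (1 + t) * (1 + s) ≤ Real.exp M * (t * s) := by
    rw [div_le_iff₀ (by positivity)] at hA; linarith
  have hE : 0 < Real.exp M := Real.exp_pos M
  have h3 : 1 ≤ Real.exp M * s := by nlinarith
  have hEE : Real.exp (-M) * Real.exp M = 1 := by
    rw [← Real.exp_add]; simp
  nlinarith [Real.exp_pos (-M)]

theorem limit_mem_face {d : ℕ} (Ω : Set (Ed d)) (hΩ : IsProperlyConvex Ω)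
    (xs ys : ℕ → Ed d) (hxs : ∀ n, xs n ∈ Ω) (hys : ∀ n, ys n ∈ Ω)
    (x y : Ed d) (hx : x ∈ closure Ω) (hy : y ∈ closure Ω)
    (hxlim : Tendsto xs atTop (nhds x)) (hylim : Tendsto ys atTop (nhds y))
    (hbdd : ∃ M : ℝ, ∀ n, hilbertDist Ω (xs n) (ys n) ≤ M) :
    y ∈ face Ω x := by
  obtain ⟨hopen, hconv, hbound, hne⟩ := hΩ
  obtain ⟨M, hM⟩ := hbdd
  by_cases hxy : x = y
  · subst hxy; exact mem_insert x _
  -- basic quantities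
  have hr : (0:ℝ) < ‖x - y‖ := by rw [norm_pos_iff]; exact sub_ne_zero.mpr hxy
  set r := ‖x - y‖ with hrdef
  obtain ⟨R, hR⟩ := hbound.subset_ball 0
  -- eventually the sequences are separated
  have hnormlim : Tendsto (fun n => ‖xs n - ys n‖) atTop (nhds r) :=
    (hxlim.sub hylim).norm
  have hev : ∀ᶠ n in atTop, ‖xs n - ys n‖ > r / 2 :=
    hnormlim (Ioi_mem_nhds (by linarith))
  obtain ⟨N, hN⟩ := eventually_atTop.mp hev
  set X := fun n => xs (n + N) with hXdef
  set Y := fun n => ys (n + N) with hYdef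
  have hXΩ : ∀ n, X n ∈ Ω := fun n => hxs _
  have hYΩ : ∀ n, Y n ∈ Ω := fun n => hys _
  have hXlim : Tendsto X atTop (nhds x) := hxlim.comp (tendsto_add_atTop_nat N)
  have hYlim : Tendsto Y atTop (nhds y) := hylim.comp (tendsto_add_atTop_nat N)
  have hsep : ∀ n, r / 2 < ‖X n - Y n‖ := fun n => hN (n + N) (Nat.le_add_left N n)
  have hXY : ∀ n, X n ≠ Y n := by
    intro n h
    have := hsep n
    rw [h, sub_self, norm_zero] at this
    linarith
  have hMn : ∀ n, hilbertDist Ω (X n) (Y n) ≤ M := fun n => hM (n + N)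
  -- the sSup quantities
  set s := fun n => sSup {t : ℝ | X n + t • (X n - Y n) ∈ Ω} with hsdef
  set t := fun n => sSup {t : ℝ | Y n + t • (Y n - X n) ∈ Ω} with htdef
  have hsP : ∀ n, 0 < s n ∧ s n * ‖X n - Y n‖ ≤ 2 * R ∧
      X n + s n • (X n - Y n) ∈ closure Ω :=
    fun n => sSup_props hopen hR (hXΩ n) (hXY n)
  have htP : ∀ n, 0 < t n ∧ t n * ‖Y n - X n‖ ≤ 2 * R ∧
      Y n + t n • (Y n - X n) ∈ closure Ω :=
    fun n => sSup_props hopen hR (hYΩ n) (Ne.symm (hXY n))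
  -- lower and upper bounds
  set c := Real.exp (-M) with hcdef
  have hc : 0 < c := Real.exp_pos _
  have hRpos : 0 < R := by
    obtain ⟨p, hp⟩ := hne
    have := hR hp
    rw [Metric.mem_ball, dist_zero_right] at this
    exact lt_of_le_of_lt (norm_nonneg p) this
  set C := 4 * R / r with hCdef
  have hbounds : ∀ n, s n ∈ Icc c C ∧ t n ∈ Icc c C := by
    intro n
    obtain ⟨hs1, hs2, -⟩ := hsP n
    obtain ⟨ht1, ht2, -⟩ := htP n
    have heq := hilbert_eq (hXY n) hs1 ht1
    have hlog := hMn n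
    rw [heq] at hlog
    have hsc : c ≤ s n := lower_bound hs1 ht1 hlog
    have hlog' : Real.log ((1 + s n) * (1 + t n) / (s n * t n)) ≤ M := by
      rw [mul_comm (1 + s n), mul_comm (s n)]; exact hlog
    have htc : c ≤ t n := lower_bound ht1 hs1 hlog'
    have hsepn := hsep n
    have hsC : s n ≤ C := by
      rw [hCdef, le_div_iff₀ hr]
      nlinarith
    have htC : t n ≤ C := by
      rw [hCdef, le_div_iff₀ hr]
      rw [norm_sub_rev] at ht2
      nlinarith
    exact ⟨⟨hsc, hsC⟩, ⟨htc, htC⟩⟩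
  -- extract convergent subsequences
  obtain ⟨sL, hsLmem, φ, hφ, hφlim⟩ :=
    isCompact_Icc.tendsto_subseq (fun n => (hbounds n).1)
  obtain ⟨tL, htLmem, ψ, hψ, hψlim⟩ :=
    isCompact_Icc.tendsto_subseq (fun n => (hbounds (φ n)).2)
  set σ := φ ∘ ψ with hσdef
  have hσmono : StrictMono σ := hφ.comp hψ
  have hσtop : Tendsto σ atTop atTop := hσmono.tendsto_atTop
  have hXσ : Tendsto (X ∘ σ) atTop (nhds x) := hXlim.comp hσtop
  have hYσ : Tendsto (Y ∘ σ) atTop (nhds y) := hYlim.comp hσtop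
  have hsσ : Tendsto (s ∘ σ) atTop (nhds sL) := hφlim.comp hψ.tendsto_atTop
  have htσ : Tendsto (t ∘ σ) atTop (nhds tL) := hψlim
  -- the limit endpoints
  have hsLpos : 0 < sL := lt_of_lt_of_le hc hsLmem.1
  have htLpos : 0 < tL := lt_of_lt_of_le hc htLmem.1
  set a := x + sL • (x - y) with hadef
  set b := y + tL • (y - x) with hbdef
  have hA : Tendsto (fun n => X (σ n) + s (σ n) • (X (σ n) - Y (σ n))) atTop (nhds a) :=
    hXσ.add (hsσ.smul (hXσ.sub hYσ))
  have hB : Tendsto (fun n => Y (σ n) + t (σ n) • (Y (σ n) - X (σ n))) atTop (nhds b) :=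
    hYσ.add (htσ.smul (hYσ.sub hXσ))
  have ha : a ∈ closure Ω :=
    isClosed_closure.mem_of_tendsto hA (Eventually.of_forall fun n => (hsP (σ n)).2.2)
  have hb : b ∈ closure Ω :=
    isClosed_closure.mem_of_tendsto hB (Eventually.of_forall fun n => (htP (σ n)).2.2)
  -- conclude
  set D := 1 + sL + tL with hDdef
  have hD : 0 < D := by positivity
  refine mem_insert_iff.mpr (Or.inr ⟨a, b, hconv.closure.segment_subset ha hb, ?_, ?_⟩)
  · refine ⟨(1 + tL) / D, sL / D, div_pos (by linarith) hD, div_pos hsLpos hD, ?_, ?_⟩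
    · rw [hDdef]; field_simp; ring
    · rw [hadef, hbdef]
      match_scalars <;> field_simp <;> ring
  · refine ⟨tL / D, (1 + sL) / D, div_pos htLpos hD, div_pos (by linarith) hD, ?_, ?_⟩
    · rw [hDdef]; field_simp; ring
    · rw [hadef, hbdef]
      match_scalars <;> field_simp <;> ring
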